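/- Let μ be a probability measure and (S̄_t)_{t≥0} a sub-Markovian semigroup of operators on bounded measurable functions, and suppose 0 < m := ∫_0^∞ (∫ S̄_t 1 dμ) dt < ∞. Assume that for every bounded measurable φ, (1/m)·∫_0^∞ (∫ S̄_t φ dμ) dt = ∫ φ dμ. Then for every s ≥ 0 and every bounded measurable φ, ∫ S̄_s φ dμ = exp(-s/m)·∫ φ dμ. -/

import Mathlib

open MeasureTheory Set

private lemma expDecay {g : ℝ → ℝ} {m a : ℝ} (hm0 : 0 < m)
    (hg : IntegrableOn g (Ioi a))
    (hid : ∀ s, a ≤ s → m * g s = ∫ t in Ioi s, g t) :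
    ∀ s, a ≤ s → g s = Real.exp (-(s - a) / m) * g a := by
  set g' : ℝ → ℝ := (Ici a).indicator g with hg'def
  have hgi : Integrable g' := by
    rw [hg'def, integrable_indicator_iff measurableSet_Ici]
    exact (integrableOn_Ici_iff_integrableOn_Ioi (by simp)).2 hg
  set c : ℝ := ∫ t in Ioi a, g t with hc
  set F : ℝ → ℝ := fun s => ∫ t in a..s, g' t with hF
  have hFc : Continuous F := hgi.continuous_primitive a
  have hG : ∀ s, a ≤ s → c - F s = ∫ t in Ioi s, g t := by
    intro s hs
    have hsplit : Ioc a s ∪ Ioi s = Ioi a := Ioc_union_Ioi_eq_Ioi hs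
    have hdisj : Disjoint (Ioc a s) (Ioi s) := by
      refine disjoint_left.2 fun x hx hx' => absurd hx.2 (not_le.2 hx')
    have h1 : IntegrableOn g (Ioc a s) := hg.mono_set fun x hx => hx.1
    have h2 : IntegrableOn g (Ioi s) := hg.mono_set (Ioi_subset_Ioi hs)
    have hsum := setIntegral_union hdisj measurableSet_Ioi h1 h2
    rw [hsplit] at hsum
    have hFeq : F s = ∫ t in Ioc a s, g t := by
      show (∫ t in a..s, g' t) = _
      rw [intervalIntegral.integral_of_le hs]
      exact setIntegral_congr_fun measurableSet_Ioc fun x hx =>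
        indicator_of_mem (le_of_lt hx.1) g
    rw [hFeq, hc]; linarith [hsum]
  have hGg : ∀ s, a ≤ s → c - F s = m * g s := fun s hs => (hG s hs).trans (hid s hs).symm
  have hg'cont : ContinuousOn g' (Ici a) := by
    refine ContinuousOn.congr (f := fun s => (c - F s) / m)
      (((continuous_const.sub hFc).div_const m).continuousOn) ?_
    intro s hs
    have h1 : g' s = g s := indicator_of_mem hs g
    have h2 := hGg s hs
    rw [h1]
    field_simp
    linarith
  have hderiv : ∀ b, a ≤ b → HasDerivWithinAt F (g' b) (Ici b) b := by
    intro b hb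
    refine intervalIntegral.integral_hasDerivWithinAt_right (hgi.intervalIntegrable)
      ⟨univ, Filter.univ_mem, by simpa using hgi.aestronglyMeasurable⟩ ?_
    exact ((hg'cont b hb).mono (Ioi_subset_Ici_self.trans (Ici_subset_Ici.2 hb)))
  intro s hs
  have key : ∀ x ∈ Icc a s,
      (c - F x) * Real.exp ((x - a) / m) = (c - F a) * Real.exp ((a - a) / m) := by
    apply constant_of_has_deriv_right_zero
    · exact ((continuous_const.sub hFc).mul
        (Real.continuous_exp.comp ((continuous_id.sub continuous_const).div_const m))).continuousOn
    · intro x hx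
      have hd1 : HasDerivWithinAt (fun y => c - F y) (-(g' x)) (Ici x) x :=
        (hderiv x hx.1).const_sub c
      have hd2 : HasDerivWithinAt (fun y => Real.exp ((y - a) / m))
          (Real.exp ((x - a) / m) * (1 / m)) (Ici x) x := by
        have : HasDerivAt (fun y : ℝ => Real.exp ((y - a) / m))
            (Real.exp ((x - a) / m) * (1 / m)) x := by
          have h0 : HasDerivAt (fun y : ℝ => (y - a) / m) (1 / m) x := by
            simpa using (((hasDerivAt_id x).sub_const a).div_const m)
          exact h0.exp
        exact this.hasDerivWithinAt
      have hprod := hd1.mul hd2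
      have hx1 : g' x = g x := indicator_of_mem hx.1 g
      have hx2 := hGg x hx.1
      have hval : -g' x * Real.exp ((x - a) / m)
          + (c - F x) * (Real.exp ((x - a) / m) * (1 / m)) = 0 := by
        rw [hx1, hx2]
        field_simp
        ring
      rw [hval] at hprod
      exact hprod
  have hks := key s ⟨hs, le_refl s⟩
  rw [hGg s hs, hGg a (le_refl a), sub_self, zero_div, Real.exp_zero, mul_one] at hks
  have he := Real.exp_ne_zero ((s - a) / m)
  have h2 : g s * Real.exp ((s - a) / m) = g a := by
    rw [mul_assoc] at hks
    exact mul_left_cancel₀ (ne_of_gt hm0) hks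
  have h3 : Real.exp (-(s - a) / m) = (Real.exp ((s - a) / m))⁻¹ := by
    rw [neg_div, Real.exp_neg]
  rw [h3, ← h2]
  field_simp

/-- A sub-Markovian semigroup `S` acting on bounded measurable functions,
for which a probability measure `μ` is a fixed point of the normalized
Laplace-transform map, makes the killing time exponential. -/
theorem stmt5 {Ω : Type*} [MeasurableSpace Ω] (μ : Measure Ω) [IsProbabilityMeasure μ]
    (S : ℝ → (Ω → ℝ) → (Ω → ℝ)) (m : ℝ)
    (hS : ∀ t : ℝ, 0 ≤ t → ∀ φ : Ω → ℝ, Measurable φ → (∃ C, ∀ x, |φ x| ≤ C) →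
      Measurable (S t φ) ∧ ∃ C, ∀ x, |S t φ x| ≤ C)
    (hsemi : ∀ t s : ℝ, 0 ≤ t → 0 ≤ s → ∀ φ : Ω → ℝ, S (t + s) φ = S t (S s φ))
    (hS0 : ∀ φ : Ω → ℝ, S 0 φ = φ)
    (hpos : ∀ t : ℝ, 0 ≤ t → ∀ φ : Ω → ℝ, (∀ x, 0 ≤ φ x) → ∀ x, 0 ≤ S t φ x)
    (hsub : ∀ t : ℝ, 0 ≤ t → ∀ x, S t (fun _ => (1 : ℝ)) x ≤ 1)
    (hm : m = ∫ t in Ioi (0 : ℝ), (∫ x, S t (fun _ => (1 : ℝ)) x ∂μ))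
    (hm0 : 0 < m)
    (hfix : ∀ φ : Ω → ℝ, Measurable φ → (∃ C, ∀ x, |φ x| ≤ C) →
      (1 / m) * (∫ t in Ioi (0 : ℝ), (∫ x, S t φ x ∂μ)) = ∫ x, φ x ∂μ) :
    ∀ s : ℝ, 0 ≤ s → ∀ φ : Ω → ℝ, Measurable φ → (∃ C, ∀ x, |φ x| ≤ C) →
      ∫ x, S s φ x ∂μ = Real.exp (-s / m) * ∫ x, φ x ∂μ := by
  intro s hs φ hφm hφb
  set g : ℝ → ℝ := fun t => ∫ x, S t φ x ∂μ with hgdef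
  have hg0 : g 0 = ∫ x, φ x ∂μ := by
    show (∫ x, S 0 φ x ∂μ) = _
    rw [hS0]
  have key : ∀ u : ℝ, 0 ≤ u → m * g u = ∫ t in Ioi u, g t := by
    intro u hu
    obtain ⟨hmeas, hbd⟩ := hS u hu φ hφm hφb
    have hf := hfix (S u φ) hmeas hbd
    have hcong : (∫ t in Ioi (0 : ℝ), (∫ x, S t (S u φ) x ∂μ))
        = ∫ t in Ioi (0 : ℝ), g (t + u) := by
      refine setIntegral_congr_fun measurableSet_Ioi fun t ht => ?_
      show (∫ x, S t (S u φ) x ∂μ) = ∫ x, S (t + u) φ x ∂μ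
      rw [hsemi t u (le_of_lt ht) hu φ]
    have hshift : (∫ t in Ioi (0 : ℝ), g (t + u)) = ∫ t in Ioi u, g t := by
      have h1 : ∀ t : ℝ, (Ioi (0 : ℝ)).indicator (fun t => g (t + u)) t
          = (Ioi u).indicator g (t + u) := by
        intro t
        simp [indicator_apply, mem_Ioi, lt_add_iff_pos_left]
      rw [← integral_indicator measurableSet_Ioi, ← integral_indicator measurableSet_Ioi]
      simp_rw [h1]
      exact integral_add_right_eq_self ((Ioi u).indicator g) u
    rw [hcong, hshift] at hf
    field_simp at hf
    linarith [hf]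
  by_cases hInt : IntegrableOn g (Ioi 0)
  · have hd := expDecay hm0 hInt (fun u hu => key u hu) s hs
    rw [sub_zero, hg0] at hd
    exact hd
  · have hzero : ∀ u, 0 ≤ u → ¬ IntegrableOn g (Ioi u) → g u = 0 := by
      intro u hu hni
      have hk := key u hu
      rw [integral_undef hni] at hk
      exact (mul_eq_zero.1 hk).resolve_left (ne_of_gt hm0)
    have hT : ∀ u, 0 ≤ u → ¬ IntegrableOn g (Ioi u) := by
      intro s₁ hs₁ h₁
      apply hInt
      set T : Set ℝ := {u | u ∈ Icc 0 s₁ ∧ IntegrableOn g (Ioi u)} with hTdef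
      have hs₁T : s₁ ∈ T := ⟨⟨hs₁, le_refl _⟩, h₁⟩
      have hne : T.Nonempty := ⟨s₁, hs₁T⟩
      have hbdd : BddBelow T := ⟨0, fun u hu => hu.1.1⟩
      set a := sInf T with hadef
      have ha0 : 0 ≤ a := le_csInf hne fun u hu => hu.1.1
      have has₁ : a ≤ s₁ := csInf_le hbdd hs₁T
      have hIgt : ∀ u, a < u → IntegrableOn g (Ioi u) := by
        intro u hu
        obtain ⟨t, htT, htu⟩ := exists_lt_of_csInf_lt hne hu
        exact htT.2.mono_set (Ioi_subset_Ioi (le_of_lt htu))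
      have hform : ∀ u, a < u → u ≤ s₁ → g u = Real.exp ((s₁ - u) / m) * g s₁ := by
        intro u hau hus₁
        have hu0 : 0 ≤ u := le_trans ha0 (le_of_lt hau)
        have hd := expDecay hm0 (hIgt u hau)
          (fun v hv => key v (le_trans hu0 hv)) s₁ hus₁
        rw [hd, ← mul_assoc, ← Real.exp_add, neg_div, add_neg_cancel, Real.exp_zero,
          one_mul]
      have hIa : IntegrableOn g (Ioi a) := by
        have hIoc : IntegrableOn g (Ioc a s₁) := by
          have hcont : IntegrableOn (fun u => Real.exp ((s₁ - u) / m) * g s₁)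
              (Ioc a s₁) := by
            apply Continuous.integrableOn_Ioc
            exact (Real.continuous_exp.comp
              ((continuous_const.sub continuous_id).div_const m)).mul continuous_const
          exact hcont.congr_fun (fun u hu => (hform u hu.1 hu.2).symm) measurableSet_Ioc
        rw [← Ioc_union_Ioi_eq_Ioi has₁]
        exact hIoc.union h₁
      rcases eq_or_lt_of_le ha0 with h | h
      · exact h ▸ hIa
      · have hIoc0 : IntegrableOn g (Ioc 0 a) := by
          have heq : EqOn g (fun _ => (0 : ℝ)) (Ioo 0 a) := by
            intro u hu
            apply hzero u (le_of_lt hu.1)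
            intro hI
            have huT : u ∈ T := ⟨⟨le_of_lt hu.1, le_trans (le_of_lt hu.2) has₁⟩, hI⟩
            exact absurd (csInf_le hbdd huT) (not_le.2 hu.2)
          have h1 : IntegrableOn g (Ioo 0 a) :=
            (integrable_zero _ _ _).integrableOn.congr_fun heq.symm measurableSet_Ioo
          have h2 : IntegrableOn g {a} := by
            unfold IntegrableOn
            rw [Measure.restrict_eq_zero.2 Real.volume_singleton]
            exact integrable_zero_measure
          have hu : Ioo 0 a ∪ {a} = Ioc 0 a := Ioo_union_right h
          rw [← hu]
          exact h1.union h2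
        rw [← Ioc_union_Ioi_eq_Ioi ha0]
        exact hIoc0.union hIa
    have hgs : g s = 0 := hzero s hs (hT s hs)
    have hg00 : g 0 = 0 := hzero 0 le_rfl (hT 0 le_rfl)
    show g s = _
    rw [hgs, ← hg0, hg00, mul_zero]
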